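/- Let k be a field, A = k[x_1,…,x_n], and f ∈ A monic in x_n with coefficients in k[x_1,…,x_{n-1}]. Then A is a free module over the subalgebra k[x_1,…,x_{n-1}, f]. -/

import Mathlib

namespace UnfoldAux
open Polynomial

variable {R : Type*} [CommRing R]

lemma indep_aux {ι : Type*} (s : Finset ι) (m : ι → ℕ) (c : ι → R[X])
    (hdist : ∀ i ∈ s, ∀ j ∈ s, c i ≠ 0 → c j ≠ 0 →
      (c i).natDegree + m i = (c j).natDegree + m j → i = j)
    (h : ∑ i ∈ s, c i * X ^ m i = 0) : ∀ i ∈ s, c i = 0 := by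
  classical
  by_contra hcon
  push_neg at hcon
  obtain ⟨i₁, hi₁s, hi₁⟩ := hcon
  have hne : (s.filter fun i => c i ≠ 0).Nonempty :=
    ⟨i₁, Finset.mem_filter.2 ⟨hi₁s, hi₁⟩⟩
  obtain ⟨i₀, hi₀, hmax⟩ :=
    Finset.exists_max_image _ (fun i => (c i).natDegree + m i) hne
  rw [Finset.mem_filter] at hi₀
  have hcoeff := congrArg (fun q : R[X] => q.coeff ((c i₀).natDegree + m i₀)) h
  simp only [finset_sum_coeff, coeff_zero] at hcoeff
  rw [Finset.sum_eq_single_of_mem i₀ hi₀.1] at hcoeff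
  · rw [coeff_mul_X_pow', if_pos (Nat.le_add_left _ _),
      Nat.add_sub_cancel, coeff_natDegree, leadingCoeff_eq_zero] at hcoeff
    exact hi₀.2 hcoeff
  · intro j hjs hji
    by_cases hj : c j = 0
    · simp [hj]
    rw [coeff_mul_X_pow']
    split_ifs with hle
    · apply coeff_eq_zero_of_natDegree_lt
      have hlej : (c j).natDegree + m j ≤ (c i₀).natDegree + m i₀ :=
        hmax j (Finset.mem_filter.2 ⟨hjs, hj⟩)
      have hne' : (c j).natDegree + m j ≠ (c i₀).natDegree + m i₀ :=
        fun he => hji (hdist j hjs i₀ hi₀.1 hj hi₀.2 he)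
      omega
    · rfl

lemma span_aux [IsDomain R] {p : R[X]} (hp : p.Monic) (hd : p.natDegree ≠ 0) :
    ∀ g : R[X], ∃ q : Fin p.natDegree → R[X],
      g = ∑ i, (q i).comp p * X ^ (i : ℕ) := by
  suffices H : ∀ N : ℕ, ∀ g : R[X], g.natDegree ≤ N →
      ∃ q : Fin p.natDegree → R[X], g = ∑ i, (q i).comp p * X ^ (i : ℕ) from
    fun g => H _ g le_rfl
  intro N
  induction N using Nat.strong_induction_on with
  | _ N IH =>
    intro g hg
    by_cases hlt : g.natDegree < p.natDegree
    · refine ⟨fun i => C (g.coeff i), ?_⟩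
      conv_lhs => rw [g.as_sum_range' p.natDegree hlt]
      rw [← Fin.sum_univ_eq_sum_range]
      exact Finset.sum_congr rfl fun i _ => by
        rw [C_comp, C_mul_X_pow_eq_monomial]
    · have hdiv : (g /ₘ p).natDegree = g.natDegree - p.natDegree :=
        natDegree_divByMonic g hp
      obtain ⟨q, hq⟩ := IH (g.natDegree - p.natDegree) (by omega) (g /ₘ p) hdiv.le
      have hmod : (g %ₘ p).natDegree < p.natDegree :=
        natDegree_modByMonic_lt g hp (fun h1 => hd (by rw [h1, natDegree_one]))
      obtain ⟨r, hrem⟩ : ∃ r : Fin p.natDegree → R,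
          g %ₘ p = ∑ i : Fin p.natDegree, C (r i) * X ^ (i : ℕ) := by
        refine ⟨fun i => (g %ₘ p).coeff i, ?_⟩
        conv_lhs => rw [(g %ₘ p).as_sum_range' p.natDegree hmod]
        rw [← Fin.sum_univ_eq_sum_range]
        exact Finset.sum_congr rfl fun i _ => by rw [C_mul_X_pow_eq_monomial]
      refine ⟨fun i => C (r i) + X * q i, ?_⟩
      beta_reduce
      conv_lhs => rw [← modByMonic_add_div g p]
      rw [hrem, hq, Finset.mul_sum, ← Finset.sum_add_distrib]
      refine Finset.sum_congr rfl fun i _ => ?_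
      rw [add_comp, C_comp, mul_comp, X_comp]
      ring

open Polynomial in
lemma key_comm {k : Type*} [Field k] {n : ℕ}
    (f : MvPolynomial (Fin (n + 1)) k) (g : MvPolynomial (Fin (n + 1)) k) :
    MvPolynomial.finSuccEquiv k n
        ((MvPolynomial.aeval (R := k)
          (fun i : Fin (n + 1) => if i = 0 then f else MvPolynomial.X i)) g)
      = ((MvPolynomial.finSuccEquiv k n) g).comp (MvPolynomial.finSuccEquiv k n f) := by
  have : (MvPolynomial.finSuccEquiv k n).toAlgHom.comp
      (MvPolynomial.aeval (R := k)
        (fun i : Fin (n + 1) => if i = 0 then f else MvPolynomial.X i))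
    = ((Polynomial.aeval (R := MvPolynomial (Fin n) k)
        (MvPolynomial.finSuccEquiv k n f)).restrictScalars k).comp
        (MvPolynomial.finSuccEquiv k n).toAlgHom := by
    apply MvPolynomial.algHom_ext
    intro i
    refine Fin.cases ?_ (fun j => ?_) i
    · simp [MvPolynomial.finSuccEquiv_X_zero]
    · simp [Fin.succ_ne_zero, MvPolynomial.finSuccEquiv_X_succ]
  have h2 := DFunLike.congr_fun this g
  simp only [AlgHom.coe_comp, Function.comp_apply, AlgHom.coe_restrictScalars',
    AlgEquiv.toAlgHom_eq_coe, AlgHom.coe_coe] at h2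
  rw [Polynomial.comp_eq_aeval]
  exact h2


end UnfoldAux

open MvPolynomial

/-- Let `k` be a field, `A = k[x₀, x₁, …, xₙ]` (the distinguished variable
"xₙ" of the paper being `X 0`), and `f ∈ A` monic in the distinguished variable with
coefficients in the polynomial ring on the other variables.  Then `A` is a free module over
the subalgebra `k[x₁, …, xₙ, f]`, realized as the range of the `k`-algebra endomorphism of
`A` sending the distinguished variable to `f` and fixing the other variables. -/
theorem unfolding_stmt2 (k : Type*) [Field k] (n : ℕ)
    (f : MvPolynomial (Fin (n + 1)) k)
    (hf : (finSuccEquiv k n f).Monic) :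
    Module.Free
      (↥(aeval (R := k)
          (fun i : Fin (n + 1) => if i = 0 then f else X i)).range)
      (MvPolynomial (Fin (n + 1)) k) := by
  classical
  set φ : MvPolynomial (Fin (n + 1)) k →ₐ[k] MvPolynomial (Fin (n + 1)) k :=
    aeval (R := k) (fun i : Fin (n + 1) => if i = 0 then f else X i) with hφ
  set e := finSuccEquiv k n with he
  set p := e f with hp
  -- membership lemma
  have hmemS : ∀ q : Polynomial (MvPolynomial (Fin n) k),
      e.symm (q.comp p) ∈ φ.range := by
    intro q
    refine ⟨e.symm q, ?_⟩
    show φ (e.symm q) = e.symm (q.comp p)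
    apply e.injective
    have h := UnfoldAux.key_comm f (e.symm q)
    rw [AlgEquiv.apply_symm_apply] at h
    rw [AlgEquiv.apply_symm_apply]
    exact h
  -- every element of the range maps to a `comp p`
  have hcomp : ∀ t : (φ.range : Subalgebra k (MvPolynomial (Fin (n + 1)) k)),
      ∃ q : Polynomial (MvPolynomial (Fin n) k), e ↑t = q.comp p := by
    rintro ⟨x, g, rfl⟩
    exact ⟨e g, UnfoldAux.key_comm f g⟩
  by_cases hd : p.natDegree = 0
  · -- p = 1, basis is all powers of X 0
    have hp1 : p = 1 := Polynomial.eq_one_of_monic_natDegree_zero hf hd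
    have hli : LinearIndependent (↥φ.range)
        (fun m : ℕ => (X 0 : MvPolynomial (Fin (n + 1)) k) ^ m) := by
      rw [linearIndependent_iff']
      intro s t ht i hi
      have hsum : ∑ j ∈ s, (e ↑(t j)) * Polynomial.X ^ j = 0 := by
        have := congrArg e ht
        simpa only [map_sum, Subalgebra.smul_def, smul_eq_mul, map_mul, map_pow,
          map_zero, he, finSuccEquiv_X_zero] using this
      have hdeg : ∀ j : ℕ, (e ↑(t j)).natDegree = 0 := by
        intro j
        obtain ⟨q, hq⟩ := hcomp (t j)
        rw [hq, hp1, Polynomial.comp_one, Polynomial.natDegree_C]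
      have := UnfoldAux.indep_aux s id (fun j => e ↑(t j))
        (fun i _ j _ _ _ hij => by simpa [hdeg] using hij) hsum i hi
      have : (↑(t i) : MvPolynomial (Fin (n + 1)) k) = 0 :=
        e.injective (by simpa using this)
      exact Subtype.ext this
    have hsp : ⊤ ≤ Submodule.span (↥φ.range)
        (Set.range fun m : ℕ => (X 0 : MvPolynomial (Fin (n + 1)) k) ^ m) := by
      intro a _
      have key : a = ∑ i ∈ Finset.range ((e a).natDegree + 1),
          (⟨e.symm (Polynomial.C ((e a).coeff i)), by
              simpa only [Polynomial.C_comp] using hmemS (Polynomial.C ((e a).coeff i))⟩ :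
            φ.range) • (X 0 : MvPolynomial (Fin (n + 1)) k) ^ i := by
        apply e.injective
        rw [map_sum]
        conv_lhs => rw [(e a).as_sum_range' ((e a).natDegree + 1) (Nat.lt_succ_self _)]
        refine Finset.sum_congr rfl fun i _ => ?_
        rw [Subalgebra.smul_def, smul_eq_mul, map_mul, map_pow,
          AlgEquiv.apply_symm_apply]
        rw [he, finSuccEquiv_X_zero, Polynomial.C_mul_X_pow_eq_monomial]
      rw [key]
      exact Submodule.sum_mem _ fun i _ =>
        Submodule.smul_mem _ _ (Submodule.subset_span ⟨i, rfl⟩)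
    exact Module.Free.of_basis (Module.Basis.mk hli hsp)
  · -- main case
    have hdvd : ∀ t : (φ.range : Subalgebra k (MvPolynomial (Fin (n + 1)) k)),
        p.natDegree ∣ (e ↑t).natDegree := by
      intro t
      obtain ⟨q, hq⟩ := hcomp t
      rw [hq, Polynomial.natDegree_comp]
      exact dvd_mul_left _ _
    have hli : LinearIndependent (↥φ.range)
        (fun i : Fin p.natDegree => (X 0 : MvPolynomial (Fin (n + 1)) k) ^ (i : ℕ)) := by
      rw [linearIndependent_iff']
      intro s t ht i hi
      have hsum : ∑ j ∈ s, (e ↑(t j)) * Polynomial.X ^ (j : ℕ) = 0 := by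
        have := congrArg e ht
        simpa only [map_sum, Subalgebra.smul_def, smul_eq_mul, map_mul, map_pow,
          map_zero, he, finSuccEquiv_X_zero] using this
      have hdist : ∀ i' ∈ s, ∀ j' ∈ s, (e ↑(t i')) ≠ 0 → (e ↑(t j')) ≠ 0 →
          (e ↑(t i')).natDegree + (i' : ℕ) = (e ↑(t j')).natDegree + (j' : ℕ) →
          i' = j' := by
        intro i' _ j' _ _ _ hij
        obtain ⟨u, hu⟩ := hdvd (t i')
        obtain ⟨v, hv⟩ := hdvd (t j')
        rw [hu, hv] at hij
        have hi' : (i' : ℕ) < p.natDegree := i'.isLt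
        have hj' : (j' : ℕ) < p.natDegree := j'.isLt
        have : (i' : ℕ) = (j' : ℕ) := by
          have h1 : (p.natDegree * u + (i' : ℕ)) % p.natDegree = (i' : ℕ) := by
            rw [Nat.mul_add_mod, Nat.mod_eq_of_lt hi']
          have h2 : (p.natDegree * v + (j' : ℕ)) % p.natDegree = (j' : ℕ) := by
            rw [Nat.mul_add_mod, Nat.mod_eq_of_lt hj']
          rw [← h1, ← h2, hij]
        exact Fin.ext this
      have := UnfoldAux.indep_aux s (fun j : Fin p.natDegree => (j : ℕ))
        (fun j => e ↑(t j)) hdist hsum i hi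
      have : (↑(t i) : MvPolynomial (Fin (n + 1)) k) = 0 :=
        e.injective (by simpa using this)
      exact Subtype.ext this
    have hsp : ⊤ ≤ Submodule.span (↥φ.range)
        (Set.range fun i : Fin p.natDegree =>
          (X 0 : MvPolynomial (Fin (n + 1)) k) ^ (i : ℕ)) := by
      intro a _
      obtain ⟨q, hq⟩ := UnfoldAux.span_aux hf hd (e a)
      have key : a = ∑ i : Fin p.natDegree,
          (⟨e.symm ((q i).comp p), hmemS (q i)⟩ : φ.range) •
            (X 0 : MvPolynomial (Fin (n + 1)) k) ^ (i : ℕ) := by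
        apply e.injective
        rw [map_sum, hq]
        refine Finset.sum_congr rfl fun i _ => ?_
        rw [Subalgebra.smul_def, smul_eq_mul, map_mul, map_pow,
          AlgEquiv.apply_symm_apply, he, finSuccEquiv_X_zero]
      rw [key]
      exact Submodule.sum_mem _ fun i _ =>
        Submodule.smul_mem _ _ (Submodule.subset_span ⟨i, rfl⟩)
    exact Module.Free.of_basis (Module.Basis.mk hli hsp)
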